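/- Let X be a finite set and x₁, …, x_T a sequence in X with T = M·τ for positive integers M and τ; set t_k := (k−1)·τ and n_t(x) := |{s ∈ {1,…,t−1} : x_s = x}|. Fix d > 0 and ε > 0. Let (r_{k,i})_{1≤k≤M, 1≤i≤τ} be nonnegative reals such that r_{k,i} ≤ √( d / n_{t_k}(x_{t_k+i}) ) whenever n_{t_k}(x_{t_k+i}) > 0 (no constraint is imposed when n_{t_k}(x_{t_k+i}) = 0). Then |{ (k,i) : r_{k,i} > ε }| ≤ ( d/(τ·ε²) + 1 ) · 2·τ·|X|. -/

import Mathlib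

open Finset
open scoped Classical

private lemma episode_div {τ : ℕ} (hτ : 0 < τ) (a b : ℕ) (hb1 : 1 ≤ b) (hb2 : b ≤ τ) :
    (a * τ + b - 1) / τ = a := by
  have h1 : a * τ + b - 1 = (b - 1) + a * τ := by omega
  rw [h1, Nat.add_mul_div_right _ _ hτ, Nat.div_eq_of_lt (by omega)]
  omega

/-- Lemma 5 (Bounding the number of large radii): with episode starts t_k = (k−1)·τ and
counts n_t(x) := |{s < t : x_s = x}|, if 0 ≤ r_{k,i} ≤ √(d/n_{t_k}(x_{t_k+i})) whenever
n_{t_k}(x_{t_k+i}) > 0, then the number of pairs (k,i) with r_{k,i} > ε is less than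
(d/(τε²) + 1)·2τ|X|. -/
theorem count_large_radii_le
    {X : Type*} [Fintype X] (M τ : ℕ) (hM : 0 < M) (hτ : 0 < τ)
    (x : ℕ → X) (d ε : ℝ) (hd : 0 < d) (hε : 0 < ε)
    (r : ℕ → ℕ → ℝ)
    (hr0 : ∀ k i, 0 ≤ r k i)
    (hr : ∀ k ∈ Finset.Icc 1 M, ∀ i ∈ Finset.Icc 1 τ,
        0 < ((Finset.Ico 1 ((k - 1) * τ)).filter
              (fun s => x s = x ((k - 1) * τ + i))).card →
        r k i ≤ Real.sqrt (d / (((Finset.Ico 1 ((k - 1) * τ)).filter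
              (fun s => x s = x ((k - 1) * τ + i))).card : ℝ))) :
    (((((Finset.Icc 1 M) ×ˢ (Finset.Icc 1 τ)).filter
        (fun ki => ε < r ki.1 ki.2)).card : ℝ))
      ≤ (d / (τ * ε ^ 2) + 1) * (2 * τ * Fintype.card X) := by
  classical
  set f : ℕ × ℕ → ℕ := fun ki => (ki.1 - 1) * τ + ki.2 with hfdef
  set n : ℕ × ℕ → ℕ := fun ki => ((Finset.Ico 1 ((ki.1 - 1) * τ)).filter
      (fun s => x s = x ((ki.1 - 1) * τ + ki.2))).card with hndef
  set P : Finset (ℕ × ℕ) := (Finset.Icc 1 M) ×ˢ (Finset.Icc 1 τ) with hP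
  set B := P.filter (fun ki => ε < r ki.1 ki.2) with hB
  -- injectivity of the time map on P
  have hinjP : ∀ p ∈ P, ∀ q ∈ P, f p = f q → p = q := by
    rintro ⟨k, i⟩ hp ⟨k', i'⟩ hq hfe
    simp only [hP, Finset.mem_product, Finset.mem_Icc] at hp hq
    have hfe' : (k - 1) * τ + i = (k' - 1) * τ + i' := hfe
    have e1 : ((k - 1) * τ + i - 1) / τ = k - 1 :=
      episode_div hτ _ _ hp.2.1 hp.2.2
    have e2 : ((k' - 1) * τ + i' - 1) / τ = k' - 1 :=
      episode_div hτ _ _ hq.2.1 hq.2.2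
    have hk1 : k - 1 = k' - 1 := by rw [← e1, ← e2, hfe']
    have hk : k = k' := by omega
    subst hk
    have hi : i = i' := Nat.add_left_cancel hfe'
    rw [hi]
  -- key: every pair in B has a small count
  have hkey : ∀ ki ∈ B, (n ki : ℝ) < d / ε ^ 2 := by
    rintro ⟨k, i⟩ hki
    simp only [hB, Finset.mem_filter] at hki
    obtain ⟨hkiP, hεr⟩ := hki
    have hkP := hkiP
    simp only [hP, Finset.mem_product] at hkP
    rcases Nat.eq_zero_or_pos (n (k, i)) with h0 | hpos
    · rw [h0]
      simp only [Nat.cast_zero]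
      positivity
    · have hrle := hr k hkP.1 i hkP.2 hpos
      have h1 : ε < Real.sqrt (d / (n (k, i) : ℝ)) := lt_of_lt_of_le hεr hrle
      have hnpos : (0 : ℝ) < (n (k, i) : ℝ) := by exact_mod_cast hpos
      have h2 : ε ^ 2 < d / (n (k, i) : ℝ) :=
        (Real.lt_sqrt hε.le).mp h1
      have h3 : ε ^ 2 * (n (k, i) : ℝ) < d := by
        rw [← lt_div_iff₀ hnpos]; exact h2
      rw [lt_div_iff₀ (by positivity : (0:ℝ) < ε ^ 2)]
      nlinarith
  -- fiberwise decomposition over X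
  have hcard : B.card = ∑ a : X, (B.filter (fun ki => x (f ki) = a)).card :=
    Finset.card_eq_sum_card_fiberwise (fun ki _ => Finset.mem_univ _)
  have hfiber : ∀ a : X,
      ((B.filter (fun ki => x (f ki) = a)).card : ℝ) ≤ d / ε ^ 2 + 1 + τ := by
    intro a
    set Ba := B.filter (fun ki => x (f ki) = a) with hBa
    rcases Ba.eq_empty_or_nonempty with he | hne
    · rw [he]
      simp only [Finset.card_empty, Nat.cast_zero]
      have : (0:ℝ) < d / ε ^ 2 := by positivity
      have : (0:ℝ) ≤ (τ : ℝ) := by positivity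
      linarith
    · obtain ⟨p, hpmem, hpmax⟩ := Finset.exists_max_image Ba f hne
      have hpB : p ∈ B := (Finset.mem_filter.mp hpmem).1
      have hpP : p ∈ P := (Finset.mem_filter.mp hpB).1
      have hpa : x (f p) = a := (Finset.mem_filter.mp hpmem).2
      have hpP' := hpP
      simp only [hP, Finset.mem_product, Finset.mem_Icc] at hpP'
      set t := (p.1 - 1) * τ with htdef
      have hBaP : ∀ q ∈ Ba, q ∈ P := fun q hq =>
        (Finset.mem_filter.mp (Finset.mem_filter.mp hq).1).1
      have hsplit : Ba.card = (Ba.filter (fun ki => f ki ≤ t)).card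
          + (Ba.filter (fun ki => ¬ f ki ≤ t)).card :=
        (Finset.card_filter_add_card_filter_not _).symm
      -- pairs after t: at most τ of them
      have hB2 : (Ba.filter (fun ki => ¬ f ki ≤ t)).card ≤ τ := by
        have hle : (Ba.filter (fun ki => ¬ f ki ≤ t)).card
            ≤ (Finset.Ioc t (t + τ)).card := by
          apply Finset.card_le_card_of_injOn f
          · intro q hq
            simp only [Finset.mem_coe, Finset.mem_filter] at hq
            have hqP := hBaP q hq.1
            have hqP' := hqP
            simp only [hP, Finset.mem_product, Finset.mem_Icc] at hqP'
            have h1 : f q ≤ f p := hpmax q hq.1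
            have h2 : f p ≤ t + τ := by
              simp only [hfdef, htdef]
              omega
            simp only [Finset.mem_coe, Finset.mem_Ioc]
            exact ⟨by omega, le_trans h1 h2⟩
          · intro q1 h1 q2 h2 hfe
            exact hinjP q1 (hBaP q1 (Finset.mem_filter.mp (Finset.mem_coe.mp h1)).1)
              q2 (hBaP q2 (Finset.mem_filter.mp (Finset.mem_coe.mp h2)).1) hfe
        simpa using hle
      -- pairs at or before t: at most n p + 1
      have hB1 : (Ba.filter (fun ki => f ki ≤ t)).card ≤ n p + 1 := by
        have hle : (Ba.filter (fun ki => f ki ≤ t)).card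
            ≤ ((Finset.Icc 1 t).filter (fun s => x s = a)).card := by
          apply Finset.card_le_card_of_injOn f
          · intro q hq
            simp only [Finset.mem_coe, Finset.mem_filter] at hq
            have hqa : x (f q) = a := (Finset.mem_filter.mp hq.1).2
            have hqP := hBaP q hq.1
            have hqP' := hqP
            simp only [hP, Finset.mem_product, Finset.mem_Icc] at hqP'
            simp only [Finset.mem_coe, Finset.mem_filter, Finset.mem_Icc]
            refine ⟨⟨?_, hq.2⟩, hqa⟩
            simp only [hfdef]
            omega
          · intro q1 h1 q2 h2 hfe
            exact hinjP q1 (hBaP q1 (Finset.mem_filter.mp (Finset.mem_coe.mp h1)).1)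
              q2 (hBaP q2 (Finset.mem_filter.mp (Finset.mem_coe.mp h2)).1) hfe
        have hsubset : (Finset.Icc 1 t).filter (fun s => x s = a)
            ⊆ insert t ((Finset.Ico 1 t).filter (fun s => x s = a)) := by
          intro s hs
          simp only [Finset.mem_filter, Finset.mem_Icc] at hs
          rcases eq_or_lt_of_le hs.1.2 with heq | hlt
          · exact Finset.mem_insert.mpr (Or.inl heq)
          · exact Finset.mem_insert.mpr (Or.inr (by
              simp only [Finset.mem_filter, Finset.mem_Ico]
              exact ⟨⟨hs.1.1, hlt⟩, hs.2⟩))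
        have hstep : ((Finset.Icc 1 t).filter (fun s => x s = a)).card
            ≤ ((Finset.Ico 1 t).filter (fun s => x s = a)).card + 1 :=
          le_trans (Finset.card_le_card hsubset) (Finset.card_insert_le _ _)
        have hnp : ((Finset.Ico 1 t).filter (fun s => x s = a)).card = n p := by
          simp only [hndef, htdef, ← hpa, hfdef]
        omega
      have hnpR : (n p : ℝ) < d / ε ^ 2 := hkey p hpB
      have : (Ba.card : ℝ) ≤ ((n p : ℝ) + 1) + (τ : ℝ) := by
        rw [hsplit]
        push_cast
        have c1 : ((Ba.filter (fun ki => f ki ≤ t)).card : ℝ) ≤ (n p : ℝ) + 1 := by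
          exact_mod_cast hB1
        have c2 : ((Ba.filter (fun ki => ¬ f ki ≤ t)).card : ℝ) ≤ (τ : ℝ) := by
          exact_mod_cast hB2
        linarith
      linarith
  -- sum up
  have hsum : (B.card : ℝ) ≤ (Fintype.card X : ℝ) * (d / ε ^ 2 + 1 + τ) := by
    rw [hcard]
    push_cast
    calc (∑ a : X, ((B.filter (fun ki => x (f ki) = a)).card : ℝ))
        ≤ ∑ _a : X, (d / ε ^ 2 + 1 + (τ : ℝ)) :=
          Finset.sum_le_sum (fun a _ => hfiber a)
      _ = (Fintype.card X : ℝ) * (d / ε ^ 2 + 1 + τ) := by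
          rw [Finset.sum_const, Finset.card_univ, nsmul_eq_mul]
  have hX1 : (1 : ℝ) ≤ (Fintype.card X : ℝ) := by
    have : 0 < Fintype.card X := Fintype.card_pos_iff.mpr ⟨x 0⟩
    exact_mod_cast this
  have hτ1 : (1 : ℝ) ≤ (τ : ℝ) := by exact_mod_cast hτ
  have hτ0 : (τ : ℝ) ≠ 0 := by positivity
  have hε0 : (ε : ℝ) ≠ 0 := ne_of_gt hε
  have hdiv : d / (τ * ε ^ 2) * τ = d / ε ^ 2 := by
    field_simp
  have hRHS : (d / (τ * ε ^ 2) + 1) * (2 * τ * (Fintype.card X : ℝ))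
      = 2 * (d / ε ^ 2) * (Fintype.card X : ℝ) + 2 * τ * (Fintype.card X : ℝ) := by
    rw [← hdiv]; ring
  have hdε : (0 : ℝ) < d / ε ^ 2 := by positivity
  rw [hRHS]
  have hXpos : (0 : ℝ) < (Fintype.card X : ℝ) := by linarith
  nlinarith [hsum, mul_pos hdε hXpos, mul_le_mul_of_nonneg_right hτ1 hXpos.le]
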